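/- arXiv:2205.15749 — 2 statements merged into one kernel-verified Lean document; each statement's English description precedes it below -/
import Mathlib

section
/- There exists an absolute constant c > 0 such that the following holds. Under the SIM, fix s ∈ ℝⁿ and ε > 0, and let P⊥ := Iₙ − xxᵀ. Conditioned on any realization of (y₁,…,y_m) satisfying (1/m) Σᵢ yᵢ² ≤ 2ξ², with conditional probability at least 1 − 2e^{−cε} one has |(1/m) Σᵢ yᵢ ⟨P⊥ aᵢ, s⟩| ≤ ξ ‖s‖₂ √ε / √m. -/
open MeasureTheory ProbabilityTheory
open scoped RealInnerProductSpace ENNReal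

/-- The standard Gaussian measure `N(0, Iₙ)` on `EuclideanSpace ℝ (Fin n)`. -/
noncomputable def stdGaussianE (n : ℕ) : Measure (EuclideanSpace ℝ (Fin n)) :=
  (Measure.pi fun _ : Fin n => gaussianReal 0 1).map
    (MeasurableEquiv.toLp 2 (Fin n → ℝ))

instance stdGaussianE_isProb (n : ℕ) : IsProbabilityMeasure (stdGaussianE n) := by
  unfold stdGaussianE
  exact Measure.isProbabilityMeasure_map (MeasurableEquiv.measurable _).aemeasurable

/-- lintegral of a product of coordinate functions over a finite power measure. -/
lemma aux_lintegral_pi_prod {α : Type*} [MeasurableSpace α] (μ : Measure α) [SigmaFinite μ] :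
    ∀ {k : ℕ} (f : Fin k → α → ℝ≥0∞), (∀ i, Measurable (f i)) →
      ∫⁻ x, ∏ i, f i (x i) ∂(Measure.pi fun _ : Fin k => μ) = ∏ i, ∫⁻ x, f i x ∂μ := by
  intro k
  induction k with
  | zero => intro f _; simp
  | succ k ih =>
    intro f hf
    have hg : Measurable fun x : Fin (k + 1) → α => ∏ i, f i (x i) :=
      Finset.measurable_prod _ fun i _ => (hf i).comp (measurable_pi_apply i)
    have hmp := (measurePreserving_piFinSuccAbove (fun _ : Fin (k + 1) => μ) 0).symm
    rw [← hmp.lintegral_comp hg]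
    simp_rw [MeasurableEquiv.piFinSuccAbove_symm_apply, Fin.insertNthEquiv,
      Equiv.coe_fn_mk, Fin.insertNth_zero, Fin.prod_univ_succ,
      Fin.cons_zero, Fin.cons_succ, cast_eq]
    rw [lintegral_prod_mul (f := fun u => f 0 u)
      (g := fun v : Fin k → α => ∏ i : Fin k, f i.succ (v i)) (hf 0).aemeasurable
      (Finset.measurable_prod _ fun i _ =>
        (hf i.succ).comp (measurable_pi_apply i)).aemeasurable]
    rw [ih (fun i => f i.succ) (fun i => hf i.succ)]

/-- Moment generating function of the standard real Gaussian, as a lower integral. -/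
lemma aux_gauss_mgf (b : ℝ) :
    ∫⁻ u, ENNReal.ofReal (Real.exp (b * u)) ∂(gaussianReal 0 1)
      = ENNReal.ofReal (Real.exp (b ^ 2 / 2)) := by
  have hmb : Measurable fun u : ℝ => ENNReal.ofReal (Real.exp (b * u)) :=
    ENNReal.measurable_ofReal.comp (Real.measurable_exp.comp (measurable_id.const_mul b))
  rw [gaussianReal_of_var_ne_zero 0 one_ne_zero,
    lintegral_withDensity_eq_lintegral_mul _ (measurable_gaussianPDF 0 1) hmb]
  have hpt : ∀ u : ℝ, (gaussianPDF 0 1 * fun u => ENNReal.ofReal (Real.exp (b * u))) u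
      = ENNReal.ofReal (Real.exp (b ^ 2 / 2)) * gaussianPDF b 1 u := by
    intro u
    simp only [Pi.mul_apply, gaussianPDF]
    rw [← ENNReal.ofReal_mul (gaussianPDFReal_nonneg _ _ _),
      ← ENNReal.ofReal_mul (Real.exp_nonneg _)]
    congr 1
    unfold gaussianPDFReal
    simp only [NNReal.coe_one, mul_one, sub_zero]
    have key : Real.exp (-u ^ 2 / 2) * Real.exp (b * u)
        = Real.exp (b ^ 2 / 2) * Real.exp (-(u - b) ^ 2 / 2) := by
      rw [← Real.exp_add, ← Real.exp_add]
      congr 1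
      ring
    linear_combination (√(2 * Real.pi))⁻¹ * key
  simp only [hpt]
  rw [lintegral_const_mul _ (measurable_gaussianPDF b 1),
    lintegral_gaussianPDF_eq_one b one_ne_zero, mul_one]

lemma aux_gauss_pi_mgf {k : ℕ} (c : Fin k → ℝ) :
    ∫⁻ u : Fin k → ℝ, ENNReal.ofReal (Real.exp (∑ i, c i * u i))
        ∂(Measure.pi fun _ : Fin k => gaussianReal 0 1)
      = ENNReal.ofReal (Real.exp (∑ i, (c i) ^ 2 / 2)) := by
  have h1 : ∀ u : Fin k → ℝ, ENNReal.ofReal (Real.exp (∑ i, c i * u i))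
      = ∏ i, ENNReal.ofReal (Real.exp (c i * u i)) := by
    intro u
    rw [Real.exp_sum, ENNReal.ofReal_prod_of_nonneg (fun i _ => Real.exp_nonneg _)]
  simp_rw [h1]
  rw [aux_lintegral_pi_prod (gaussianReal 0 1)
    (fun i u => ENNReal.ofReal (Real.exp (c i * u)))
    (fun i => ENNReal.measurable_ofReal.comp
      (Real.measurable_exp.comp (measurable_id.const_mul (c i))))]
  simp_rw [aux_gauss_mgf]
  rw [← ENNReal.ofReal_prod_of_nonneg (fun i _ => Real.exp_nonneg _), ← Real.exp_sum]

lemma aux_stdGaussianE_mgf (n : ℕ) (t : EuclideanSpace ℝ (Fin n)) :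
    ∫⁻ v, ENNReal.ofReal (Real.exp ⟪v, t⟫) ∂(stdGaussianE n)
      = ENNReal.ofReal (Real.exp (‖t‖ ^ 2 / 2)) := by
  have hmeas : Measurable fun v : EuclideanSpace ℝ (Fin n) =>
      ENNReal.ofReal (Real.exp ⟪v, t⟫) := by
    apply ENNReal.measurable_ofReal.comp
    exact (Real.continuous_exp.comp (continuous_id.inner continuous_const)).measurable
  rw [stdGaussianE, lintegral_map hmeas (MeasurableEquiv.measurable _)]
  have h1 : ∀ u : Fin n → ℝ,
      ⟪(MeasurableEquiv.toLp 2 (Fin n → ℝ)) u, t⟫ = ∑ j, t j * u j := by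
    intro u
    rw [PiLp.inner_apply]
    exact Finset.sum_congr rfl fun j _ => by
      rw [show ((MeasurableEquiv.toLp 2 (Fin n → ℝ)) u) j = u j from rfl,
        RCLike.inner_apply, conj_trivial, mul_comm]
  simp_rw [h1]
  rw [aux_gauss_pi_mgf]
  congr 2
  rw [EuclideanSpace.norm_eq, Real.sq_sqrt (by positivity)]
  rw [Finset.sum_div]
  exact Finset.sum_congr rfl fun j _ => by rw [Real.norm_eq_abs, sq_abs]

/-- Chernoff bound for a linear functional of i.i.d. standard Gaussians. -/
lemma aux_chernoff {n m : ℕ} (z : Fin m → EuclideanSpace ℝ (Fin n)) (t σ2 : ℝ)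
    (hσ2 : σ2 = ∑ i, ‖z i‖ ^ 2) (hσpos : 0 < σ2) (ht : 0 ≤ t) :
    (Measure.pi fun _ : Fin m => stdGaussianE n) {v | t ≤ ∑ i, ⟪v i, z i⟫}
      ≤ ENNReal.ofReal (Real.exp (-(t ^ 2 / (2 * σ2)))) := by
  set lam := t / σ2 with hlam
  have hlam0 : 0 ≤ lam := div_nonneg ht hσpos.le
  have hSmeas : Measurable fun v : Fin m → EuclideanSpace ℝ (Fin n) => ∑ i, ⟪v i, z i⟫ :=
    Finset.measurable_sum _ fun i _ =>
      ((continuous_id.inner continuous_const).measurable).comp (measurable_pi_apply i)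
  have hmgf : ∫⁻ v, ENNReal.ofReal (Real.exp (lam * ∑ i, ⟪v i, z i⟫))
        ∂(Measure.pi fun _ : Fin m => stdGaussianE n)
      = ENNReal.ofReal (Real.exp (lam ^ 2 * σ2 / 2)) := by
    have h1 : ∀ v : Fin m → EuclideanSpace ℝ (Fin n),
        ENNReal.ofReal (Real.exp (lam * ∑ i, ⟪v i, z i⟫))
          = ∏ i, ENNReal.ofReal (Real.exp ⟪v i, lam • z i⟫) := by
      intro v
      rw [Finset.mul_sum, Real.exp_sum,
        ENNReal.ofReal_prod_of_nonneg (fun i _ => Real.exp_nonneg _)]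
      exact Finset.prod_congr rfl fun i _ => by rw [real_inner_smul_right]
    simp_rw [h1]
    rw [aux_lintegral_pi_prod (stdGaussianE n)
      (fun i v => ENNReal.ofReal (Real.exp ⟪v, lam • z i⟫))
      (fun i => ENNReal.measurable_ofReal.comp
        ((Real.continuous_exp.comp (continuous_id.inner continuous_const)).measurable))]
    simp_rw [aux_stdGaussianE_mgf]
    rw [← ENNReal.ofReal_prod_of_nonneg (fun i _ => Real.exp_nonneg _), ← Real.exp_sum]
    congr 2
    have : ∀ i : Fin m, ‖lam • z i‖ ^ 2 / 2 = lam ^ 2 * ‖z i‖ ^ 2 / 2 := by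
      intro i
      rw [norm_smul, Real.norm_eq_abs, mul_pow, sq_abs]
    simp_rw [this, hσ2, Finset.mul_sum, Finset.sum_div]
  have hsub : {v : Fin m → EuclideanSpace ℝ (Fin n) | t ≤ ∑ i, ⟪v i, z i⟫}
      ⊆ {v | ENNReal.ofReal (Real.exp (lam * t))
          ≤ ENNReal.ofReal (Real.exp (lam * ∑ i, ⟪v i, z i⟫))} := by
    intro v hv
    exact ENNReal.ofReal_le_ofReal (Real.exp_le_exp.mpr
      (mul_le_mul_of_nonneg_left hv hlam0))
  have hmarkov := mul_meas_ge_le_lintegral₀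
    (μ := Measure.pi fun _ : Fin m => stdGaussianE n)
    (f := fun v => ENNReal.ofReal (Real.exp (lam * ∑ i, ⟪v i, z i⟫)))
    (by
      apply Measurable.aemeasurable
      exact ENNReal.measurable_ofReal.comp
        ((Real.continuous_exp.measurable).comp (hSmeas.const_mul lam)))
    (ENNReal.ofReal (Real.exp (lam * t)))
  rw [hmgf] at hmarkov
  have hkey : ENNReal.ofReal (Real.exp (lam * t))
        * (Measure.pi fun _ : Fin m => stdGaussianE n) {v | t ≤ ∑ i, ⟪v i, z i⟫}
      ≤ ENNReal.ofReal (Real.exp (lam * t))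
        * ENNReal.ofReal (Real.exp (-(t ^ 2 / (2 * σ2)))) := by
    refine le_trans (mul_le_mul_right (measure_mono hsub) _) (le_trans hmarkov ?_)
    rw [← ENNReal.ofReal_mul (Real.exp_nonneg _), ← Real.exp_add]
    apply ENNReal.ofReal_le_ofReal
    apply Real.exp_le_exp.mpr
    have : lam ^ 2 * σ2 / 2 = lam * t + -(t ^ 2 / (2 * σ2)) := by
      rw [hlam]
      field_simp
      ring
    rw [this]
  exact (ENNReal.mul_le_mul_iff_right (by positivity) ENNReal.ofReal_ne_top).mp hkey

/-- There is an absolute constant `c > 0` such that, under the SIM,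
conditioned on any realization `w = (w₁, …, w_m)` of `(y₁, …, y_m)` satisfying
`(1/m) Σᵢ wᵢ² ≤ 2ξ²` (under which the projections `P⊥ aᵢ = aᵢ − ⟨aᵢ, x⟩ x` remain i.i.d.
standard Gaussian on the orthogonal complement of `x`), with conditional probability at least
`1 − 2e^{−cε}` one has `|(1/m) Σᵢ wᵢ ⟨P⊥ aᵢ, s⟩| ≤ ξ ‖s‖₂ √ε / √m`.
Here `ξ² := E[f(g)²]`, where the random nonlinearity is `F (· )` with noise distribution `κ`. -/
theorem stmt2 :
    ∃ c : ℝ, 0 < c ∧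
      ∀ (Ω Θ : Type) (_ : MeasurableSpace Ω) (_ : MeasurableSpace Θ)
        (P : Measure Ω) (_ : IsProbabilityMeasure P)
        (κ : Measure Θ) (_ : IsProbabilityMeasure κ)
        (n m : ℕ) (_ : 0 < m)
        (a : Fin m → Ω → EuclideanSpace ℝ (Fin n)) (_ : ∀ i, Measurable (a i))
        -- the aᵢ are i.i.d. standard Gaussian vectors N(0, Iₙ)
        (_ : Measure.map (fun ω => fun i => a i ω) P
          = Measure.pi fun _ : Fin m => stdGaussianE n)
        (x : EuclideanSpace ℝ (Fin n)) (_ : ‖x‖ = 1)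
        (F : Θ → ℝ → ℝ) (_ : Measurable (Function.uncurry F))
        (ξ : ℝ) (_ : 0 ≤ ξ)
        -- ξ² := E[f(g)²]
        (_ : ξ ^ 2 = ∫ p : Θ × ℝ, (F p.1 p.2) ^ 2 ∂(κ.prod (gaussianReal 0 1)))
        -- w is a realization of (y₁, …, y_m) satisfying (1/m) Σᵢ wᵢ² ≤ 2ξ²
        (w : Fin m → ℝ) (_ : (m : ℝ)⁻¹ * ∑ i, (w i) ^ 2 ≤ 2 * ξ ^ 2)
        (s : EuclideanSpace ℝ (Fin n)) (ε : ℝ) (_ : 0 < ε),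
        (P {ω | abs ((m : ℝ)⁻¹ * ∑ i, w i * ⟪a i ω - ⟪a i ω, x⟫ • x, s⟫)
            ≤ ξ * ‖s‖ * Real.sqrt ε / Real.sqrt m}).toReal
          ≥ 1 - 2 * Real.exp (-(c * ε)) := by
  refine ⟨1/4, by norm_num, ?_⟩
  intro Ω Θ _ _ P _ κ _ n m hm a ha hmap x hx F hF ξ hξ hξ2 w hw s ε hε
  have hm0 : (0:ℝ) < m := Nat.cast_pos.mpr hm
  set s' : EuclideanSpace ℝ (Fin n) := s - ⟪x, s⟫ • x with hs'
  set z : Fin m → EuclideanSpace ℝ (Fin n) := fun i => ((w i) / m) • s' with hzdef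
  set t : ℝ := ξ * ‖s‖ * Real.sqrt ε / Real.sqrt m with htdef
  clear_value s' z t
  have ht0 : 0 ≤ t := by
    rw [htdef]
    exact div_nonneg (mul_nonneg (mul_nonneg hξ (norm_nonneg s)) (Real.sqrt_nonneg _))
      (Real.sqrt_nonneg _)
  have hexp_pos : 0 < Real.exp (-(1/4*ε)) := Real.exp_pos _
  -- pointwise identity
  have hTz : ∀ ω, (m : ℝ)⁻¹ * ∑ i, w i * ⟪a i ω - ⟪a i ω, x⟫ • x, s⟫
      = ∑ i, ⟪a i ω, z i⟫ := by
    intro ω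
    rw [Finset.mul_sum]
    refine Finset.sum_congr rfl fun i _ => ?_
    simp only [hzdef, hs', inner_sub_left, inner_sub_right, real_inner_smul_left,
      real_inner_smul_right]
    ring
  have hEset : {ω | |(m : ℝ)⁻¹ * ∑ i, w i * ⟪a i ω - ⟪a i ω, x⟫ • x, s⟫| ≤ t}
      = {ω | |∑ i, ⟪a i ω, z i⟫| ≤ t} := by
    ext ω
    simp only [Set.mem_setOf_eq, hTz ω]
  rw [hEset]
  by_cases hzero : ∀ i, z i = 0
  · have huniv : {ω | |∑ i, ⟪a i ω, z i⟫| ≤ t} = Set.univ := by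
      ext ω
      simp only [Set.mem_setOf_eq, Set.mem_univ, iff_true]
      have hz0 : ∑ i, ⟪a i ω, z i⟫ = (0:ℝ) :=
        Finset.sum_eq_zero fun i _ => by rw [hzero i, inner_zero_right]
      rw [hz0, abs_zero]
      exact ht0
    rw [huniv, measure_univ, ENNReal.toReal_one]
    linarith
  -- nondegenerate case
  · set σ2 : ℝ := ∑ i, ‖z i‖ ^ 2 with hσ2def
    clear_value σ2
    have hσnn : ∀ i ∈ Finset.univ, (0:ℝ) ≤ ‖z i‖ ^ 2 := fun i _ => sq_nonneg _
    have hσpos : 0 < σ2 := by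
      rw [hσ2def]
      rcases (Finset.sum_nonneg hσnn).lt_or_eq with h | h
      · exact h
      · exfalso
        apply hzero
        intro i
        have h0 := (Finset.sum_eq_zero_iff_of_nonneg hσnn).mp h.symm i (Finset.mem_univ i)
        exact norm_eq_zero.mp (pow_eq_zero_iff two_ne_zero |>.mp h0)
    -- ‖s'‖ ≤ ‖s‖
    have hs'le : ‖s'‖ ^ 2 ≤ ‖s‖ ^ 2 := by
      have h1 := norm_sub_sq_real s (⟪x, s⟫ • x)
      rw [real_inner_smul_right, norm_smul, Real.norm_eq_abs, hx, mul_one] at h1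
      have hc : ⟪x, s⟫ * ⟪s, x⟫ = |⟪x, s⟫| ^ 2 := by
        rw [real_inner_comm x s, sq_abs, sq]
      rw [hc] at h1
      rw [hs']
      linarith [sq_nonneg |⟪x, s⟫|]
    have hσ2calc : σ2 = (∑ i, (w i) ^ 2) * ‖s'‖ ^ 2 / (m : ℝ) ^ 2 := by
      rw [hσ2def, Finset.sum_mul, Finset.sum_div]
      refine Finset.sum_congr rfl fun i _ => ?_
      rw [hzdef]
      rw [norm_smul, Real.norm_eq_abs, mul_pow, sq_abs, div_pow]
      ring
    have ht2 : t ^ 2 = ξ ^ 2 * ‖s‖ ^ 2 * ε / m := by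
      rw [htdef, div_pow, mul_pow, mul_pow, Real.sq_sqrt hε.le, Real.sq_sqrt hm0.le]
    have hwsum : ∑ i, (w i) ^ 2 ≤ (m : ℝ) * (2 * ξ ^ 2) := by
      rw [inv_mul_le_iff₀ hm0] at hw
      exact hw
    have hεt : ε / 4 ≤ t ^ 2 / (2 * σ2) := by
      have h2σ : (0:ℝ) < 2 * σ2 := by linarith
      rw [div_le_div_iff₀ (by norm_num : (0:ℝ) < 4) h2σ]
      have hm' : (m : ℝ) ≠ 0 := ne_of_gt hm0
      have h1 : (∑ i, (w i) ^ 2) * ‖s'‖ ^ 2 ≤ ((m : ℝ) * (2 * ξ ^ 2)) * ‖s‖ ^ 2 :=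
        mul_le_mul hwsum hs'le (sq_nonneg _) (by positivity)
      have h2 : σ2 * (m : ℝ) ^ 2 = (∑ i, (w i) ^ 2) * ‖s'‖ ^ 2 := by
        rw [hσ2calc]
        field_simp
      have h3 : t ^ 2 * (m : ℝ) = ξ ^ 2 * ‖s‖ ^ 2 * ε := by
        rw [ht2]
        field_simp
      have h4 : 2 * ε * ((∑ i, (w i) ^ 2) * ‖s'‖ ^ 2)
          ≤ 2 * ε * (((m : ℝ) * (2 * ξ ^ 2)) * ‖s‖ ^ 2) :=
        mul_le_mul_of_nonneg_left h1 (by linarith)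
      nlinarith [h4, h2, h3, hm0, mul_pos hm0 hm0]
    -- measure-theoretic part
    set A : Ω → (Fin m → EuclideanSpace ℝ (Fin n)) := fun ω => fun i => a i ω with hA
    have hAmeas : Measurable A := measurable_pi_lambda _ ha
    have hSmeas : ∀ y : Fin m → EuclideanSpace ℝ (Fin n) → ℝ, True := fun _ => trivial
    have hSm : Measurable fun v : Fin m → EuclideanSpace ℝ (Fin n) => ∑ i, ⟪v i, z i⟫ :=
      Finset.measurable_sum _ fun i _ =>
        ((continuous_id.inner continuous_const).measurable).comp (measurable_pi_apply i)
    have hSm' : Measurable fun v : Fin m → EuclideanSpace ℝ (Fin n) => ∑ i, ⟪v i, -(z i)⟫ :=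
      Finset.measurable_sum _ fun i _ =>
        ((continuous_id.inner continuous_const).measurable).comp (measurable_pi_apply i)
    have hB1 : MeasurableSet {v : Fin m → EuclideanSpace ℝ (Fin n) | t ≤ ∑ i, ⟪v i, z i⟫} :=
      measurableSet_le measurable_const hSm
    have hB2 : MeasurableSet {v : Fin m → EuclideanSpace ℝ (Fin n) | t ≤ ∑ i, ⟪v i, -(z i)⟫} :=
      measurableSet_le measurable_const hSm'
    have hexpmono : ENNReal.ofReal (Real.exp (-(t ^ 2 / (2 * σ2))))
        ≤ ENNReal.ofReal (Real.exp (-(1/4 * ε))) := by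
      apply ENNReal.ofReal_le_ofReal
      apply Real.exp_le_exp.mpr
      have : (1:ℝ)/4 * ε = ε / 4 := by ring
      rw [this]
      linarith
    have hP1 : P (A ⁻¹' {v | t ≤ ∑ i, ⟪v i, z i⟫}) ≤ ENNReal.ofReal (Real.exp (-(1/4 * ε))) := by
      rw [← Measure.map_apply hAmeas hB1, hA, hmap]
      exact le_trans (aux_chernoff z t σ2 hσ2def hσpos ht0) hexpmono
    have hP2 : P (A ⁻¹' {v | t ≤ ∑ i, ⟪v i, -(z i)⟫})
        ≤ ENNReal.ofReal (Real.exp (-(1/4 * ε))) := by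
      rw [← Measure.map_apply hAmeas hB2, hA, hmap]
      refine le_trans (aux_chernoff (fun i => -(z i)) t σ2 ?_ hσpos ht0) hexpmono
      simp only [norm_neg]
      exact hσ2def
    have hEmeas : MeasurableSet {ω | |∑ i, ⟪a i ω, z i⟫| ≤ t} := by
      have : Measurable fun ω => ∑ i, ⟪a i ω, z i⟫ := hSm.comp hAmeas
      exact measurableSet_le this.abs measurable_const
    have hcompl : {ω | |∑ i, ⟪a i ω, z i⟫| ≤ t}ᶜ
        ⊆ (A ⁻¹' {v | t ≤ ∑ i, ⟪v i, z i⟫}) ∪ (A ⁻¹' {v | t ≤ ∑ i, ⟪v i, -(z i)⟫}) := by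
      intro ω hω
      simp only [Set.mem_compl_iff, Set.mem_setOf_eq, not_le] at hω
      rcases lt_abs.mp hω with h | h
      · left
        exact le_of_lt h
      · right
        simp only [Set.mem_preimage, Set.mem_setOf_eq, inner_neg_right, Finset.sum_neg_distrib]
        exact le_of_lt h
    have hEc : P {ω | |∑ i, ⟪a i ω, z i⟫| ≤ t}ᶜ
        ≤ ENNReal.ofReal (2 * Real.exp (-(1/4 * ε))) := by
      refine le_trans (measure_mono hcompl) (le_trans (measure_union_le _ _) ?_)
      refine le_trans (add_le_add hP1 hP2) ?_
      rw [← ENNReal.ofReal_add (Real.exp_nonneg _) (Real.exp_nonneg _)]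
      apply ENNReal.ofReal_le_ofReal
      linarith
    have hsum : P {ω | |∑ i, ⟪a i ω, z i⟫| ≤ t} + P {ω | |∑ i, ⟪a i ω, z i⟫| ≤ t}ᶜ = 1 :=
      (measure_add_measure_compl hEmeas).trans measure_univ
    have htoReal : (P {ω | |∑ i, ⟪a i ω, z i⟫| ≤ t}).toReal
        = 1 - (P {ω | |∑ i, ⟪a i ω, z i⟫| ≤ t}ᶜ).toReal := by
      have h := congrArg ENNReal.toReal hsum
      rw [ENNReal.toReal_add (measure_ne_top P _) (measure_ne_top P _),
        ENNReal.toReal_one] at h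
      linarith
    rw [htoReal]
    have h2' : (P {ω | |∑ i, ⟪a i ω, z i⟫| ≤ t}ᶜ).toReal ≤ 2 * Real.exp (-(1/4 * ε)) :=
      ENNReal.toReal_le_of_le_ofReal (by positivity) hEc
    linarith
end

section
/- There exists an absolute constant c > 0 such that the following holds. Under the SIM, let P⊥ := Iₙ − xxᵀ. Conditioned on any realization of (y₁,…,y_m) satisfying (1/m) Σᵢ yᵢ² ≤ 2ξ², for any ε > 0, with conditional probability at least 1 − 2n e^{−cε} one has ‖(1/m) Σᵢ yᵢ P⊥ aᵢ‖_∞ ≤ ξ √ε / √m, where ‖·‖_∞ denotes the entrywise maximum absolute value. -/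
open MeasureTheory ProbabilityTheory
open scoped RealInnerProductSpace NNReal ENNReal

lemma pdf_key (s t : ℝ) :
    gaussianPDFReal 0 1 t * Real.exp (s * t)
      = Real.exp (s ^ 2 / 2) * gaussianPDFReal s 1 t := by
  simp only [gaussianPDFReal, NNReal.coe_one, mul_one, sub_zero]
  rw [mul_assoc, ← Real.exp_add,
    show Real.exp (s ^ 2 / 2) * ((Real.sqrt (2 * Real.pi))⁻¹ * Real.exp (-(t - s) ^ 2 / 2))
      = (Real.sqrt (2 * Real.pi))⁻¹ * (Real.exp (s ^ 2 / 2) * Real.exp (-(t - s) ^ 2 / 2)) by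
        ring,
    ← Real.exp_add]
  congr 1
  ring_nf

lemma gauss_density_fun (s : ℝ) :
    (fun t => ((gaussianPDFReal 0 1 t).toNNReal : ℝ≥0) • Real.exp (s * t))
      = fun t => Real.exp (s ^ 2 / 2) * gaussianPDFReal s 1 t := by
  funext t
  rw [NNReal.smul_def, Real.coe_toNNReal _ (gaussianPDFReal_nonneg 0 1 t), smul_eq_mul, pdf_key]

lemma integrable_exp_gaussian (s : ℝ) :
    Integrable (fun t => Real.exp (s * t)) (gaussianReal 0 1) := by
  rw [gaussianReal_of_var_ne_zero 0 one_ne_zero,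
    show gaussianPDF 0 1 = (fun t => (((gaussianPDFReal 0 1 t).toNNReal : ℝ≥0) : ℝ≥0∞)) from rfl,
    integrable_withDensity_iff_integrable_smul ((measurable_gaussianPDFReal 0 1).real_toNNReal),
    gauss_density_fun]
  exact (integrable_gaussianPDFReal s 1).const_mul _

lemma integral_exp_gaussian (s : ℝ) :
    ∫ t, Real.exp (s * t) ∂gaussianReal 0 1 = Real.exp (s ^ 2 / 2) := by
  rw [gaussianReal_of_var_ne_zero 0 one_ne_zero,
    show gaussianPDF 0 1 = (fun t => (((gaussianPDFReal 0 1 t).toNNReal : ℝ≥0) : ℝ≥0∞)) from rfl,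
    integral_withDensity_eq_integral_smul ((measurable_gaussianPDFReal 0 1).real_toNNReal)]
  rw [show (fun t => ((gaussianPDFReal 0 1 t).toNNReal : ℝ≥0) • Real.exp (s * t))
      = fun t => Real.exp (s ^ 2 / 2) * gaussianPDFReal s 1 t from gauss_density_fun s]
  rw [integral_const_mul, integral_gaussianPDFReal_eq_one s one_ne_zero, mul_one]

lemma integrable_exp_pi_flat {ι : Type} [Fintype ι] (c : ι → ℝ) :
    Integrable (fun g : ι → ℝ => Real.exp (∑ i, c i * g i))
      (Measure.pi fun _ : ι => gaussianReal 0 1) := by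
  letI : MeasureSpace ℝ := ⟨gaussianReal 0 1⟩
  haveI : SigmaFinite (volume : Measure ℝ) :=
    inferInstanceAs (SigmaFinite (gaussianReal 0 1))
  have hvol : (Measure.pi fun _ : ι => gaussianReal 0 1) = (volume : Measure (ι → ℝ)) := rfl
  rw [hvol]
  simp_rw [Real.exp_sum]
  exact Integrable.fintype_prod (f := fun i t => Real.exp (c i * t))
    fun i => integrable_exp_gaussian (c i)

lemma integral_exp_pi_flat {ι : Type} [Fintype ι] (c : ι → ℝ) :
    ∫ g : ι → ℝ, Real.exp (∑ i, c i * g i) ∂(Measure.pi fun _ : ι => gaussianReal 0 1)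
      = Real.exp ((∑ i, c i ^ 2) / 2) := by
  letI : MeasureSpace ℝ := ⟨gaussianReal 0 1⟩
  haveI : SigmaFinite (volume : Measure ℝ) :=
    inferInstanceAs (SigmaFinite (gaussianReal 0 1))
  have hvol : (Measure.pi fun _ : ι => gaussianReal 0 1) = (volume : Measure (ι → ℝ)) := rfl
  rw [hvol]
  simp_rw [Real.exp_sum]
  rw [show (volume : Measure (ι → ℝ)) = Measure.pi fun _ => volume from rfl,
    integral_fintype_prod_eq_prod (fun i t => Real.exp (c i * t))]
  have : ∀ i : ι, (∫ t : ℝ, Real.exp (c i * t)) = Real.exp ((c i) ^ 2 / 2) :=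
    fun i => integral_exp_gaussian (c i)
  rw [Finset.prod_congr rfl fun i _ => this i, ← Real.exp_sum, ← Finset.sum_div]

lemma integrable_exp_pi_nested {m n : ℕ} (c : Fin m → Fin n → ℝ) :
    Integrable (fun g : Fin m → Fin n → ℝ => Real.exp (∑ i, ∑ k, c i k * g i k))
      (Measure.pi fun _ : Fin m => Measure.pi fun _ : Fin n => gaussianReal 0 1) := by
  letI : MeasureSpace ℝ := ⟨gaussianReal 0 1⟩
  haveI : SigmaFinite (volume : Measure ℝ) :=
    inferInstanceAs (SigmaFinite (gaussianReal 0 1))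
  haveI : SigmaFinite (volume : Measure (Fin n → ℝ)) :=
    inferInstanceAs (SigmaFinite (Measure.pi fun _ : Fin n => gaussianReal 0 1))
  have hvol : (Measure.pi fun _ : Fin m => Measure.pi fun _ : Fin n => gaussianReal 0 1)
      = (volume : Measure (Fin m → Fin n → ℝ)) := rfl
  rw [hvol]
  have : ∀ g : Fin m → Fin n → ℝ,
      Real.exp (∑ i, ∑ k, c i k * g i k) = ∏ i, Real.exp (∑ k, c i k * g i k) :=
    fun g => Real.exp_sum _ _
  rw [show (fun g : Fin m → Fin n → ℝ => Real.exp (∑ i, ∑ k, c i k * g i k))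
      = fun g => ∏ i, Real.exp (∑ k, c i k * g i k) from funext this]
  exact Integrable.fintype_prod (E := Fin n → ℝ) (f := fun i h => Real.exp (∑ k, c i k * h k))
    fun i => integrable_exp_pi_flat (c i)

lemma integral_exp_pi_nested {m n : ℕ} (c : Fin m → Fin n → ℝ) :
    ∫ g, Real.exp (∑ i, ∑ k, c i k * g i k)
        ∂(Measure.pi fun _ : Fin m => Measure.pi fun _ : Fin n => gaussianReal 0 1)
      = Real.exp ((∑ i, ∑ k, c i k ^ 2) / 2) := by
  letI : MeasureSpace ℝ := ⟨gaussianReal 0 1⟩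
  haveI : SigmaFinite (volume : Measure ℝ) :=
    inferInstanceAs (SigmaFinite (gaussianReal 0 1))
  haveI : SigmaFinite (volume : Measure (Fin n → ℝ)) :=
    inferInstanceAs (SigmaFinite (Measure.pi fun _ : Fin n => gaussianReal 0 1))
  have hvol : (Measure.pi fun _ : Fin m => Measure.pi fun _ : Fin n => gaussianReal 0 1)
      = (volume : Measure (Fin m → Fin n → ℝ)) := rfl
  rw [hvol]
  have h1 : ∀ g : Fin m → Fin n → ℝ,
      Real.exp (∑ i, ∑ k, c i k * g i k) = ∏ i, Real.exp (∑ k, c i k * g i k) :=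
    fun g => Real.exp_sum _ _
  rw [show (fun g : Fin m → Fin n → ℝ => Real.exp (∑ i, ∑ k, c i k * g i k))
      = fun g => ∏ i, Real.exp (∑ k, c i k * g i k) from funext h1]
  rw [show (volume : Measure (Fin m → Fin n → ℝ)) = Measure.pi fun _ => volume from rfl,
    integral_fintype_prod_eq_prod (E := fun _ : Fin m => Fin n → ℝ)
    (fun i h => Real.exp (∑ k, c i k * h k))]
  have h2 : ∀ i, (∫ h : Fin n → ℝ, Real.exp (∑ k, c i k * h k))
      = Real.exp ((∑ k, c i k ^ 2) / 2) := fun i => integral_exp_pi_flat (c i)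
  rw [Finset.prod_congr rfl fun i _ => h2 i, ← Real.exp_sum, ← Finset.sum_div]


instance stdGaussianE_prob (n : ℕ) : IsProbabilityMeasure (stdGaussianE n) :=
  Measure.isProbabilityMeasure_map
    (MeasurableEquiv.toLp 2 (Fin n → ℝ)).measurable.aemeasurable

lemma pi_stdGaussianE_eq (m n : ℕ) :
    (Measure.pi fun _ : Fin m => stdGaussianE n)
      = Measure.map
          (MeasurableEquiv.piCongrRight fun _ : Fin m =>
            (MeasurableEquiv.toLp 2 (Fin n → ℝ)))
          (Measure.pi fun _ : Fin m => Measure.pi fun _ : Fin n => gaussianReal 0 1) := by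
  refine Measure.pi_eq (μ := fun _ : Fin m => stdGaussianE n) fun s hs => ?_
  rw [MeasurableEquiv.map_apply]
  have hpre : (MeasurableEquiv.piCongrRight fun _ : Fin m =>
        (MeasurableEquiv.toLp 2 (Fin n → ℝ))) ⁻¹' (Set.univ.pi s)
      = Set.univ.pi fun i =>
          (MeasurableEquiv.toLp 2 (Fin n → ℝ)) ⁻¹' (s i) := by
    ext g
    simp [MeasurableEquiv.piCongrRight, Set.mem_pi]
  rw [hpre, Measure.pi_pi]
  refine Finset.prod_congr rfl fun i _ => ?_
  rw [stdGaussianE, MeasurableEquiv.map_apply]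

lemma integrable_exp_pi_std {m n : ℕ} (c : Fin m → Fin n → ℝ) :
    Integrable (fun v : Fin m → EuclideanSpace ℝ (Fin n) => Real.exp (∑ i, ∑ k, c i k * v i k))
      (Measure.pi fun _ : Fin m => stdGaussianE n) := by
  rw [pi_stdGaussianE_eq]
  rw [integrable_map_equiv (MeasurableEquiv.piCongrRight fun _ : Fin m =>
      (MeasurableEquiv.toLp 2 (Fin n → ℝ)))]
  exact integrable_exp_pi_nested c

lemma integral_exp_pi_std {m n : ℕ} (c : Fin m → Fin n → ℝ) :
    ∫ v, Real.exp (∑ i, ∑ k, c i k * v i k) ∂(Measure.pi fun _ : Fin m => stdGaussianE n)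
      = Real.exp ((∑ i, ∑ k, c i k ^ 2) / 2) := by
  rw [pi_stdGaussianE_eq,
    integral_map_equiv (MeasurableEquiv.piCongrRight fun _ : Fin m =>
      (MeasurableEquiv.toLp 2 (Fin n → ℝ)))]
  exact integral_exp_pi_nested c

lemma chernoff_std {m n : ℕ} (c : Fin m → Fin n → ℝ) {B t : ℝ} (hB : 0 < B)
    (hc : ∑ i, ∑ k, c i k ^ 2 ≤ B) (ht : 0 ≤ t) :
    ((Measure.pi fun _ : Fin m => stdGaussianE n)
        {v | t ≤ ∑ i, ∑ k, c i k * v i k}).toReal ≤ Real.exp (-(t ^ 2 / (2 * B))) := by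
  set μ := Measure.pi fun _ : Fin m => stdGaussianE n with hμ
  set X : (Fin m → EuclideanSpace ℝ (Fin n)) → ℝ := fun v => ∑ i, ∑ k, c i k * v i k with hX
  have hlam : 0 ≤ t / B := div_nonneg ht hB.le
  have hint : Integrable (fun v => Real.exp ((t / B) * X v)) μ := by
    have : (fun v : Fin m → EuclideanSpace ℝ (Fin n) => Real.exp ((t / B) * X v))
        = fun v => Real.exp (∑ i, ∑ k, ((t / B) * c i k) * v i k) := by
      funext v
      congr 1
      rw [hX, Finset.mul_sum]
      refine Finset.sum_congr rfl fun i _ => ?_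
      rw [Finset.mul_sum]
      exact Finset.sum_congr rfl fun k _ => by ring
    rw [this]
    exact integrable_exp_pi_std _
  have hb := measure_ge_le_exp_mul_mgf (μ := μ) (X := X) t hlam hint
  refine hb.trans ?_
  have hmgf : mgf X μ (t / B) = Real.exp ((t / B) ^ 2 * (∑ i, ∑ k, c i k ^ 2) / 2) := by
    rw [mgf]
    have : (fun v : Fin m → EuclideanSpace ℝ (Fin n) => Real.exp ((t / B) * X v))
        = fun v => Real.exp (∑ i, ∑ k, ((t / B) * c i k) * v i k) := by
      funext v
      congr 1
      rw [hX, Finset.mul_sum]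
      refine Finset.sum_congr rfl fun i _ => ?_
      rw [Finset.mul_sum]
      exact Finset.sum_congr rfl fun k _ => by ring
    calc ∫ v, Real.exp ((t / B) * X v) ∂μ
        = ∫ v, Real.exp (∑ i, ∑ k, ((t / B) * c i k) * v i k) ∂μ := by rw [this]
      _ = Real.exp ((∑ i, ∑ k, ((t / B) * c i k) ^ 2) / 2) := integral_exp_pi_std _
      _ = Real.exp ((t / B) ^ 2 * (∑ i, ∑ k, c i k ^ 2) / 2) := by
          congr 1
          rw [Finset.mul_sum]
          rw [show ∀ S : ℝ, S / 2 = S / 2 from fun _ => rfl]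
          congr 1
          refine Finset.sum_congr rfl fun i _ => ?_
          rw [Finset.mul_sum]
          exact Finset.sum_congr rfl fun k _ => by ring
  rw [hmgf, ← Real.exp_add]
  rw [Real.exp_le_exp]
  have h1 : (t / B) ^ 2 * (∑ i, ∑ k, c i k ^ 2) / 2 ≤ (t / B) ^ 2 * B / 2 := by
    have := mul_le_mul_of_nonneg_left hc (sq_nonneg (t / B))
    linarith
  have h2 : -(t / B) * t + (t / B) ^ 2 * B / 2 = -(t ^ 2 / (2 * B)) := by
    field_simp
    ring
  linarith

lemma zeq_aux (n m : ℕ) (x : EuclideanSpace ℝ (Fin n)) (w : Fin m → ℝ) (j : Fin n)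
    (v : Fin m → EuclideanSpace ℝ (Fin n)) :
    (m : ℝ)⁻¹ * ∑ i, w i * (v i - ⟪v i, x⟫ • x) j
      = ∑ i, ∑ k, ((m : ℝ)⁻¹ * w i * ((if k = j then 1 else 0) - x k * x j)) * v i k := by
  have hinner : ∀ u : EuclideanSpace ℝ (Fin n), ⟪u, x⟫ = ∑ k, u k * x k := fun u => by
    simp [PiLp.inner_apply, RCLike.inner_apply, conj_trivial]; exact Finset.sum_congr rfl fun _ _ => mul_comm _ _
  rw [Finset.mul_sum]
  refine Finset.sum_congr rfl fun i _ => ?_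
  have happ : (v i - ⟪v i, x⟫ • x) j = v i j - (∑ k, v i k * x k) * x j := by
    simp [PiLp.sub_apply, PiLp.smul_apply, smul_eq_mul, hinner]
  rw [happ]
  rw [show ∀ z : Fin n → ℝ, (∑ k, ((m : ℝ)⁻¹ * w i * ((if k = j then 1 else 0) - x k * x j)) * z k)
      = (∑ k, (if k = j then ((m : ℝ)⁻¹ * w i) * z k else 0)) - ∑ k, ((m : ℝ)⁻¹ * w i) * (x k * x j * z k)
    from fun z => by
      rw [← Finset.sum_sub_distrib]
      refine Finset.sum_congr rfl fun k _ => by split <;> ring]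
  rw [Finset.sum_ite_eq' Finset.univ j, ← Finset.mul_sum]
  simp only [Finset.mem_univ, if_true]
  rw [show ∑ k, x k * x j * v i k = (∑ k, v i k * x k) * x j from by
    rw [Finset.sum_mul]; exact Finset.sum_congr rfl fun k _ => by ring]
  ring

lemma sq_sum_bound (n m : ℕ) (hm : 0 < m) (x : Fin n → ℝ) (hx2 : ∑ k, x k ^ 2 = 1)
    (w : Fin m → ℝ) (ξ : ℝ) (hw : (m : ℝ)⁻¹ * ∑ i, (w i) ^ 2 ≤ 2 * ξ ^ 2) (j : Fin n) :
    ∑ i, ∑ k, ((m : ℝ)⁻¹ * w i * ((if k = j then 1 else 0) - x k * x j)) ^ 2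
      ≤ 2 * ξ ^ 2 / m := by
  have hmr : (0 : ℝ) < m := Nat.cast_pos.2 hm
  have hkey : ∑ k, ((if k = j then (1:ℝ) else 0) - x k * x j) ^ 2 ≤ 1 := by
    have hexp : ∀ k, ((if k = j then (1:ℝ) else 0) - x k * x j) ^ 2
        = (if k = j then (1 - 2 * (x j * x j)) else 0) + x j ^ 2 * x k ^ 2 := by
      intro k
      rcases eq_or_ne k j with h | h
      · subst h; norm_num; ring
      · simp only [if_neg h]; ring
    rw [Finset.sum_congr rfl fun k _ => hexp k, Finset.sum_add_distrib,
      Finset.sum_ite_eq' Finset.univ j, ← Finset.mul_sum, hx2]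
    simp only [Finset.mem_univ, if_true]
    nlinarith [sq_nonneg (x j)]
  calc ∑ i, ∑ k, ((m : ℝ)⁻¹ * w i * ((if k = j then 1 else 0) - x k * x j)) ^ 2
      = ∑ i, ((m : ℝ)⁻¹ * w i) ^ 2 * ∑ k, ((if k = j then (1:ℝ) else 0) - x k * x j) ^ 2 := by
        refine Finset.sum_congr rfl fun i _ => ?_
        rw [Finset.mul_sum]
        exact Finset.sum_congr rfl fun k _ => by ring
    _ ≤ ∑ i, ((m : ℝ)⁻¹ * w i) ^ 2 * 1 := by
        refine Finset.sum_le_sum fun i _ => ?_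
        exact mul_le_mul_of_nonneg_left hkey (sq_nonneg _)
    _ = (m : ℝ)⁻¹ * ((m : ℝ)⁻¹ * ∑ i, w i ^ 2) := by
        rw [Finset.mul_sum, Finset.mul_sum]
        exact Finset.sum_congr rfl fun i _ => by ring
    _ ≤ (m : ℝ)⁻¹ * (2 * ξ ^ 2) := by
        exact mul_le_mul_of_nonneg_left hw (by positivity)
    _ = 2 * ξ ^ 2 / m := by field_simp

/-- There is an absolute constant `c > 0` such that, under the SIM,
conditioned on any realization `w = (w₁, …, w_m)` of `(y₁, …, y_m)` satisfying
`(1/m) Σᵢ wᵢ² ≤ 2ξ²`, for any `ε > 0`, with conditional probability at least `1 − 2n e^{−cε}`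
one has `‖(1/m) Σᵢ wᵢ P⊥ aᵢ‖_∞ ≤ ξ √ε / √m`, where `P⊥ aᵢ = aᵢ − ⟨aᵢ, x⟩ x` and `‖·‖_∞` is
the entrywise maximum absolute value (expressed entrywise below). -/
theorem stmt11 :
    ∃ c : ℝ, 0 < c ∧
      ∀ (Ω Θ : Type) (_ : MeasurableSpace Ω) (_ : MeasurableSpace Θ)
        (P : Measure Ω) (_ : IsProbabilityMeasure P)
        (κ : Measure Θ) (_ : IsProbabilityMeasure κ)
        (n m : ℕ) (_ : 0 < m)
        (a : Fin m → Ω → EuclideanSpace ℝ (Fin n)) (_ : ∀ i, Measurable (a i))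
        -- the aᵢ are i.i.d. standard Gaussian vectors N(0, Iₙ)
        (_ : Measure.map (fun ω => fun i => a i ω) P
          = Measure.pi fun _ : Fin m => stdGaussianE n)
        (x : EuclideanSpace ℝ (Fin n)) (_ : ‖x‖ = 1)
        (F : Θ → ℝ → ℝ) (_ : Measurable (Function.uncurry F))
        (ξ : ℝ) (_ : 0 ≤ ξ)
        -- ξ² := E[f(g)²]
        (_ : ξ ^ 2 = ∫ p : Θ × ℝ, (F p.1 p.2) ^ 2 ∂(κ.prod (gaussianReal 0 1)))
        -- w is a realization of (y₁, …, y_m) satisfying (1/m) Σᵢ wᵢ² ≤ 2ξ²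
        (w : Fin m → ℝ) (_ : (m : ℝ)⁻¹ * ∑ i, (w i) ^ 2 ≤ 2 * ξ ^ 2)
        (ε : ℝ) (_ : 0 < ε),
        (P {ω | ∀ j : Fin n,
            abs ((m : ℝ)⁻¹ * ∑ i, w i * (a i ω - ⟪a i ω, x⟫ • x) j)
              ≤ ξ * Real.sqrt ε / Real.sqrt m}).toReal
          ≥ 1 - 2 * n * Real.exp (-(c * ε)) := by
  refine ⟨1/4, by norm_num, ?_⟩
  intro Ω Θ _ _ P _ κ _ n m hm a ha hmap x hx F hF ξ hξ hξ2 w hw ε hε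
  have hmr : (0 : ℝ) < m := Nat.cast_pos.2 hm
  set t : ℝ := ξ * Real.sqrt ε / Real.sqrt m with htdef
  have ht0 : 0 ≤ t := by positivity
  have hA : Measurable fun ω => fun i => a i ω := measurable_pi_lambda _ ha
  set πμ : Measure (Fin m → EuclideanSpace ℝ (Fin n)) :=
    Measure.pi fun _ : Fin m => stdGaussianE n with hπμ
  haveI : IsProbabilityMeasure πμ := by rw [hπμ]; infer_instance
  set Z : Fin n → (Fin m → EuclideanSpace ℝ (Fin n)) → ℝ :=
    fun j v => (m : ℝ)⁻¹ * ∑ i, w i * (v i - ⟪v i, x⟫ • x) j with hZdef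
  have hZmeas : ∀ j, Measurable (Z j) := by
    intro j
    apply Measurable.const_mul
    apply Finset.measurable_sum
    intro i _
    apply Measurable.const_mul
    have h1 : Measurable fun v : Fin m → EuclideanSpace ℝ (Fin n) => v i :=
      measurable_pi_apply i
    have h2 : Continuous fun u : EuclideanSpace ℝ (Fin n) => (u - ⟪u, x⟫ • x) j :=
      ((continuous_apply j).comp (PiLp.continuous_ofLp (p := 2) (β := fun _ : Fin n => ℝ))).comp
        (continuous_id.sub (by fun_prop))
    exact h2.measurable.comp h1
  set S : Set (Fin m → EuclideanSpace ℝ (Fin n)) := {v | ∀ j, |Z j v| ≤ t} with hSdef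
  have hSmeas : MeasurableSet S := by
    have : S = ⋂ j, {v | |Z j v| ≤ t} := by
      ext v; simp [hSdef, Set.mem_iInter]
    rw [this]
    exact MeasurableSet.iInter fun j =>
      measurableSet_le ((hZmeas j).abs) measurable_const
  have hPS : P {ω | ∀ j : Fin n,
        |(m : ℝ)⁻¹ * ∑ i, w i * (a i ω - ⟪a i ω, x⟫ • x) j| ≤ t} = πμ S := by
    rw [← hmap, Measure.map_apply hA hSmeas]
    rfl
  rw [ge_iff_le, hPS]
  -- case ξ = 0
  rcases eq_or_lt_of_le hξ with hξ0 | hξpos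
  · have hw0 : ∀ i, w i = 0 := by
      intro i
      have hsum : ∑ i, (w i) ^ 2 ≤ 0 := by
        by_contra hpos
        push_neg at hpos
        have h5 := hw
        rw [← hξ0] at h5
        nlinarith [mul_pos (inv_pos.2 hmr) hpos]
      have := Finset.sum_eq_zero_iff_of_nonneg
        (fun i (_ : i ∈ Finset.univ) => sq_nonneg (w i))
      have hz : ∑ i, (w i) ^ 2 = 0 := le_antisymm hsum
        (Finset.sum_nonneg fun i _ => sq_nonneg (w i))
      exact pow_eq_zero_iff (n := 2) (by norm_num) |>.1 (this.1 hz i (Finset.mem_univ i))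
    have hSuniv : S = Set.univ := by
      refine Set.eq_univ_iff_forall.2 fun v j => ?_
      have : Z j v = 0 := by
        rw [hZdef]
        simp only
        rw [Finset.sum_congr rfl fun i _ => by rw [hw0 i, zero_mul]]
        simp
      rw [this, abs_zero]
      positivity
    rw [hSuniv, measure_univ, ENNReal.toReal_one]
    have : 0 ≤ 2 * (n : ℝ) * Real.exp (-(1/4 * ε)) := by positivity
    linarith
  -- main case ξ > 0
  · have hx2 : ∑ k, x k ^ 2 = 1 := by
      have h := hx
      rw [EuclideanSpace.norm_eq] at h
      have h2 : ∑ k, ‖x k‖ ^ 2 = 1 := by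
        have := congrArg (fun r : ℝ => r ^ 2) h
        simp only [Real.sq_sqrt (Finset.sum_nonneg fun k _ => sq_nonneg _)] at this
        simpa using this
      simpa [Real.norm_eq_abs, sq_abs] using h2
    set cc : Fin n → Fin m → Fin n → ℝ :=
      fun j i k => (m : ℝ)⁻¹ * w i * ((if k = j then 1 else 0) - x k * x j) with hccdef
    have hZeq : ∀ j v, Z j v = ∑ i, ∑ k, cc j i k * v i k := fun j v => zeq_aux n m x w j v
    have hB : (0 : ℝ) < 2 * ξ ^ 2 / m := by positivity
    have hcb : ∀ j, ∑ i, ∑ k, cc j i k ^ 2 ≤ 2 * ξ ^ 2 / m :=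
      fun j => sq_sum_bound n m hm x hx2 w ξ hw j
    have hteq : Real.exp (-(t ^ 2 / (2 * (2 * ξ ^ 2 / m)))) = Real.exp (-(1/4 * ε)) := by
      congr 1
      rw [htdef]
      rw [div_pow, mul_pow, Real.sq_sqrt hε.le, Real.sq_sqrt hmr.le]
      field_simp
      ring
    set Ep : Fin n → Set (Fin m → EuclideanSpace ℝ (Fin n)) :=
      fun j => {v | t ≤ ∑ i, ∑ k, cc j i k * v i k} with hEp
    set Em : Fin n → Set (Fin m → EuclideanSpace ℝ (Fin n)) :=
      fun j => {v | t ≤ ∑ i, ∑ k, (-(cc j i k)) * v i k} with hEm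
    have hplus : ∀ j, (πμ (Ep j)).toReal ≤ Real.exp (-(1/4 * ε)) := fun j =>
      (chernoff_std (cc j) hB (hcb j) ht0).trans (le_of_eq hteq)
    have hminus : ∀ j, (πμ (Em j)).toReal ≤ Real.exp (-(1/4 * ε)) := by
      intro j
      refine (chernoff_std (fun i k => -(cc j i k)) hB ?_ ht0).trans (le_of_eq hteq)
      calc ∑ i, ∑ k, (-(cc j i k)) ^ 2 = ∑ i, ∑ k, cc j i k ^ 2 := by
            refine Finset.sum_congr rfl fun i _ => Finset.sum_congr rfl fun k _ => by ring
        _ ≤ 2 * ξ ^ 2 / m := hcb j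
    have hsub : Sᶜ ⊆ ⋃ j, Ep j ∪ Em j := by
      intro v hv
      simp only [hSdef, Set.mem_compl_iff, Set.mem_setOf_eq, not_forall, not_le] at hv
      obtain ⟨j, hj⟩ := hv
      refine Set.mem_iUnion.2 ⟨j, ?_⟩
      rcases abs_cases (Z j v) with ⟨he, _⟩ | ⟨he, _⟩
      · left
        have : t ≤ Z j v := by rw [← he]; exact hj.le
        rw [hZeq j v] at this
        exact this
      · right
        have : t ≤ -(Z j v) := by rw [← he]; exact hj.le
        rw [hZeq j v] at this
        have hneg : -(∑ i, ∑ k, cc j i k * v i k) = ∑ i, ∑ k, (-(cc j i k)) * v i k := by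
          rw [← Finset.sum_neg_distrib]
          refine Finset.sum_congr rfl fun i _ => ?_
          rw [← Finset.sum_neg_distrib]
          exact Finset.sum_congr rfl fun k _ => by ring
        rw [hneg] at this
        exact this
    have hunion : (πμ Sᶜ).toReal ≤ 2 * n * Real.exp (-(1/4 * ε)) := by
      have h1 : πμ Sᶜ ≤ ∑ j, πμ (Ep j ∪ Em j) :=
        le_trans (measure_mono hsub) (measure_iUnion_fintype_le _ _)
      have h2 : (πμ Sᶜ).toReal ≤ ∑ j, (πμ (Ep j ∪ Em j)).toReal := by
        refine (ENNReal.toReal_mono ?_ h1).trans_eq ?_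
        · exact ENNReal.sum_ne_top.2 fun j _ => measure_ne_top _ _
        · exact ENNReal.toReal_sum fun j _ => measure_ne_top _ _
      refine h2.trans ?_
      have h3 : ∀ j, (πμ (Ep j ∪ Em j)).toReal
          ≤ Real.exp (-(1/4 * ε)) + Real.exp (-(1/4 * ε)) := by
        intro j
        have := measure_union_le (μ := πμ) (Ep j) (Em j)
        have h4 : (πμ (Ep j ∪ Em j)).toReal ≤ (πμ (Ep j)).toReal + (πμ (Em j)).toReal := by
          refine (ENNReal.toReal_mono ?_ this).trans_eq ?_
          · exact ENNReal.add_ne_top.2 ⟨measure_ne_top _ _, measure_ne_top _ _⟩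
          · exact ENNReal.toReal_add (measure_ne_top _ _) (measure_ne_top _ _)
        exact h4.trans (add_le_add (hplus j) (hminus j))
      refine (Finset.sum_le_sum fun j _ => h3 j).trans ?_
      rw [Finset.sum_const, Finset.card_univ, Fintype.card_fin, nsmul_eq_mul]
      ring_nf
      exact le_of_eq rfl
    have hS1 : (πμ Sᶜ).toReal = 1 - (πμ S).toReal := by
      rw [measure_compl hSmeas (measure_ne_top _ _), measure_univ,
        ENNReal.toReal_sub_of_le prob_le_one ENNReal.one_ne_top, ENNReal.toReal_one]
    linarith
end
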